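/- Let A ∈ ℝ^{m×N} with rank(A) = m, y ∈ ℝ^m, p ≥ 2 and α > 0, and let ψ_α(t) be the state of the gradient flow. Then for all t ∈ [0,∞), ‖Aψ_α(t) − y‖₂ ≤ ‖y‖₂ exp(−Ct), where C = 2p²σ_min(A)²α^{2p−2}. In particular Aψ_α(t) → y as t → ∞. -/

import Mathlib

noncomputable section

/-- The Euclidean (ℓ²) norm of a vector in ℝⁿ. -/
def norm2 {n : ℕ} (v : Fin n → ℝ) : ℝ := Real.sqrt (∑ i, v i ^ 2)

/-- The ℓ¹ norm of a vector in ℝⁿ. -/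
def norm1 {n : ℕ} (v : Fin n → ℝ) : ℝ := ∑ i, |v i|

/-- The sup (ℓ^∞) norm of a vector in ℝⁿ. -/
def normInf {n : ℕ} (v : Fin n → ℝ) : ℝ := ⨆ i, |v i|

/-- The ℓʳ (quasi-)norm ‖v‖_r = (∑ |v i|^r)^(1/r). -/
def normr {n : ℕ} (r : ℝ) (v : Fin n → ℝ) : ℝ := (∑ i, |v i| ^ r) ^ (1 / r)

/-- The smallest singular value of `A`, via `σ_min(A) = inf {‖Aᵀ z‖₂ : ‖z‖₂ = 1}`. -/
def sigmaMin {m N : ℕ} (A : Matrix (Fin m) (Fin N) ℝ) : ℝ :=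
  sInf {c : ℝ | ∃ z : Fin m → ℝ, norm2 z = 1 ∧ c = norm2 (A.transpose.mulVec z)}

/-- The entropy H(z) = −∑ |z i| ln |z i| (with the convention 0 · ln 0 = 0,
which holds automatically since `Real.log 0 = 0`). -/
def Hent {n : ℕ} (z : Fin n → ℝ) : ℝ := -∑ i, |z i| * Real.log |z i|

/-- The set 𝒰(A,y) of basis-pursuit minimizers: minimizers of ‖·‖₁ subject to Az = y. -/
def BPset {m N : ℕ} (A : Matrix (Fin m) (Fin N) ℝ) (y : Fin m → ℝ) : Set (Fin N → ℝ) :=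
  {z | A.mulVec z = y ∧ ∀ w : Fin N → ℝ, A.mulVec w = y → norm1 z ≤ norm1 w}

/-- The basis-pursuit minimum value R(A,y) = min {‖z‖₁ : Az = y}. -/
def Rmin {m N : ℕ} (A : Matrix (Fin m) (Fin N) ℝ) (y : Fin m → ℝ) : ℝ :=
  sInf (norm1 '' {z : Fin N → ℝ | A.mulVec z = y})

/-- The function h_p: h₂(t) = 2 sinh t, and for p > 2,
h_p(t) = (1−t)^{−p/(p−2)} − (1+t)^{−p/(p−2)}. -/
def hfun (p t : ℝ) : ℝ :=
  if p = 2 then 2 * Real.sinh t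
  else (1 - t) ^ (-(p / (p - 2))) - (1 + t) ^ (-(p / (p - 2)))

/-- The natural domain of h_p: all of ℝ when p = 2, and (−1,1) when p > 2. -/
def hDomain (p : ℝ) : Set ℝ := if p = 2 then Set.univ else Set.Ioo (-1) 1

/-- The inverse h_p^{-1} : ℝ → ℝ of h_p (h_p is a strictly increasing bijection
from its domain onto ℝ). -/
def hInv (p u : ℝ) : ℝ := Function.invFunOn (hfun p) (hDomain p) u

/-- q_p(u) = ∫₀ᵘ h_p^{−1}(v) dv. -/
def qfun (p u : ℝ) : ℝ := ∫ v in (0:ℝ)..u, hInv p v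

/-- Q_p(z) = α^p ∑ q_p(z i / α^p). -/
def Qfun {n : ℕ} (p α : ℝ) (z : Fin n → ℝ) : ℝ := α ^ p * ∑ i, qfun p (z i / α ^ p)

/-- g_p: g₂(u) = |u| ln(|u|/e) (with g₂(0) = 0), and for p > 2,
g_p(u) = |u| − (p/2)|u|^{2/p}. -/
def gfun (p u : ℝ) : ℝ :=
  if p = 2 then (if u = 0 then 0 else |u| * Real.log (|u| / Real.exp 1))
  else |u| - p / 2 * |u| ^ (2 / p)

/-- G_p(z) = α^p ∑ g_p(z i / α^p). -/
def Gfun {n : ℕ} (p α : ℝ) (z : Fin n → ℝ) : ℝ := α ^ p * ∑ i, gfun p (z i / α ^ p)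

/-- The predictor ψ_θ = θ₊^p − θ₋^p (componentwise powers), for a parameter vector
θ = (θ₊, θ₋) ∈ ℝ^{2N}. -/
def psiOf {N : ℕ} (p : ℝ) (θ : EuclideanSpace ℝ (Fin N ⊕ Fin N)) : Fin N → ℝ :=
  fun i => θ (Sum.inl i) ^ p - θ (Sum.inr i) ^ p

/-- The squared loss L(θ) = (1/2)‖A ψ_θ − y‖₂². -/
def lossFun {m N : ℕ} (A : Matrix (Fin m) (Fin N) ℝ) (y : Fin m → ℝ) (p : ℝ)
    (θ : EuclideanSpace ℝ (Fin N ⊕ Fin N)) : ℝ :=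
  (1 / 2) * ∑ j, (A.mulVec (psiOf p θ) j - y j) ^ 2

end

noncomputable section StmtSix

namespace StmtSix

open Set

lemma norm2_nonneg {n : ℕ} (v : Fin n → ℝ) : 0 ≤ norm2 v := Real.sqrt_nonneg _

lemma sq_norm2 {n : ℕ} (v : Fin n → ℝ) : norm2 v ^ 2 = ∑ i, v i ^ 2 :=
  Real.sq_sqrt (by positivity)

lemma norm2_eq_zero {n : ℕ} {v : Fin n → ℝ} (h : norm2 v = 0) : v = 0 := by
  have h2 : ∑ i, v i ^ 2 = 0 := by
    have := congrArg (· ^ 2) h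
    simpa [sq_norm2] using this
  funext i
  have := (Finset.sum_eq_zero_iff_of_nonneg (fun i _ => sq_nonneg (v i))).1 h2 i (Finset.mem_univ i)
  exact pow_eq_zero_iff (by norm_num) |>.1 this

lemma norm2_pos {n : ℕ} {v : Fin n → ℝ} (h : v ≠ 0) : 0 < norm2 v := by
  rcases lt_or_eq_of_le (norm2_nonneg v) with h1 | h1
  · exact h1
  · exact absurd (norm2_eq_zero h1.symm) h

lemma norm2_smul {n : ℕ} {c : ℝ} (hc : 0 ≤ c) (v : Fin n → ℝ) :
    norm2 (c • v) = c * norm2 v := by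
  unfold norm2
  have : ∑ i, (c • v) i ^ 2 = c ^ 2 * ∑ i, v i ^ 2 := by
    rw [Finset.mul_sum]
    exact Finset.sum_congr rfl fun i _ => by simp [smul_eq_mul]; ring
  rw [this, Real.sqrt_mul (sq_nonneg c), Real.sqrt_sq hc]

lemma norm2_continuous {n m : ℕ} (B : Matrix (Fin n) (Fin m) ℝ) :
    Continuous fun z : Fin m → ℝ => norm2 (B.mulVec z) := by
  apply Real.continuous_sqrt.comp
  apply continuous_finset_sum
  intro i _
  have : Continuous fun z : Fin m → ℝ => B.mulVec z i := by
    simp only [Matrix.mulVec, dotProduct]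
    fun_prop
  fun_prop

lemma transpose_mulVec_injective {m N : ℕ} (A : Matrix (Fin m) (Fin N) ℝ) (hA : A.rank = m) :
    Function.Injective A.transpose.mulVec := by
  have hrk : A.transpose.rank = m := by rw [Matrix.rank_transpose]; exact hA
  have h := A.transpose.mulVecLin.finrank_range_add_finrank_ker
  rw [show Module.finrank ℝ (Fin m → ℝ) = m by simp] at h
  rw [Matrix.rank] at hrk
  have hker : Module.finrank ℝ (LinearMap.ker A.transpose.mulVecLin) = 0 := by omega
  have : LinearMap.ker A.transpose.mulVecLin = ⊥ :=
    Submodule.finrank_eq_zero.1 hker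
  exact LinearMap.ker_eq_bot.1 this

lemma sphere_compact {m : ℕ} : IsCompact {z : Fin m → ℝ | norm2 z = 1} := by
  apply Metric.isCompact_of_isClosed_isBounded
  · exact isClosed_eq (by
      apply Real.continuous_sqrt.comp; fun_prop) continuous_const
  · rw [Metric.isBounded_iff_subset_closedBall 0]
    refine ⟨1, fun z hz => ?_⟩
    simp only [Metric.mem_closedBall, dist_zero_right]
    rw [pi_norm_le_iff_of_nonneg (by norm_num)]
    intro i
    rw [Real.norm_eq_abs]
    have hz1 : ∑ j, z j ^ 2 = 1 := by
      have : norm2 z = 1 := hz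
      rw [← sq_norm2, this]; norm_num
    have hle : z i ^ 2 ≤ 1 := by
      rw [← hz1]
      exact Finset.single_le_sum (f := fun j => z j ^ 2) (fun j _ => sq_nonneg (z j)) (Finset.mem_univ i)
    rw [abs_le]
    constructor <;> nlinarith

lemma sigma_lemmas {m N : ℕ} (hm : 1 ≤ m) (A : Matrix (Fin m) (Fin N) ℝ) (hA : A.rank = m) :
    0 < sigmaMin A ∧ ∀ z : Fin m → ℝ, sigmaMin A * norm2 z ≤ norm2 (A.transpose.mulVec z) := by
  set S := {z : Fin m → ℝ | norm2 z = 1} with hS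
  set f := fun z : Fin m → ℝ => norm2 (A.transpose.mulVec z) with hf
  have hSne : S.Nonempty := by
    refine ⟨fun j => if j = ⟨0, hm⟩ then 1 else 0, ?_⟩
    show norm2 _ = 1
    unfold norm2
    rw [show ∑ i, (if i = (⟨0, hm⟩ : Fin m) then (1:ℝ) else 0) ^ 2 = 1 by
      rw [Finset.sum_eq_single (⟨0, hm⟩ : Fin m)] <;> simp +contextual]
    exact Real.sqrt_one
  obtain ⟨z0, hz0S, hz0min⟩ := sphere_compact.exists_isMinOn hSne
    ((norm2_continuous A.transpose).continuousOn)
  have hz0pos : 0 < f z0 := by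
    rcases lt_or_eq_of_le (norm2_nonneg (A.transpose.mulVec z0)) with h | h
    · exact h
    · exfalso
      have h0 : A.transpose.mulVec z0 = 0 := norm2_eq_zero h.symm
      have : z0 = 0 := by
        apply transpose_mulVec_injective A hA
        rw [h0, Matrix.mulVec_zero]
      simp only [Set.mem_setOf_eq, this] at hz0S
      have : norm2 (0 : Fin m → ℝ) = 0 := by unfold norm2; simp
      rw [this] at hz0S; norm_num at hz0S
  have hset : {c : ℝ | ∃ z : Fin m → ℝ, norm2 z = 1 ∧ c = norm2 (A.transpose.mulVec z)} = f '' S := by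
    ext c; constructor
    · rintro ⟨z, hz1, rfl⟩; exact ⟨z, hz1, rfl⟩
    · rintro ⟨z, hz1, rfl⟩; exact ⟨z, hz1, rfl⟩
  have hsig : sigmaMin A = f z0 := by
    rw [sigmaMin, hset]
    apply le_antisymm
    · exact csInf_le ⟨0, by rintro c ⟨z, _, rfl⟩; exact norm2_nonneg _⟩ ⟨z0, hz0S, rfl⟩
    · exact le_csInf (hSne.image f) (by rintro c ⟨z, hz, rfl⟩; exact hz0min hz)
  constructor
  · rw [hsig]; exact hz0pos
  · intro z
    by_cases hz : z = 0
    · subst hz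
      have : norm2 (0 : Fin m → ℝ) = 0 := by unfold norm2; simp
      rw [this, Matrix.mulVec_zero, mul_zero]
      exact le_of_eq (by unfold norm2; simp)
    · have hnz : 0 < norm2 z := norm2_pos hz
      set w := (norm2 z)⁻¹ • z with hw
      have hwS : w ∈ S := by
        show norm2 w = 1
        rw [hw, norm2_smul (by positivity)]
        field_simp
      have hfw : f w = (norm2 z)⁻¹ * f z := by
        rw [hf]
        simp only
        rw [hw, Matrix.mulVec_smul, norm2_smul (by positivity)]
      have : sigmaMin A ≤ f w := hsig ▸ hz0min hwS
      rw [hfw] at this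
      calc sigmaMin A * norm2 z ≤ ((norm2 z)⁻¹ * f z) * norm2 z := by nlinarith
        _ = f z := by field_simp

def resid {m N : ℕ} (A : Matrix (Fin m) (Fin N) ℝ) (y : Fin m → ℝ) (p : ℝ)
    (x : EuclideanSpace ℝ (Fin N ⊕ Fin N)) : Fin m → ℝ :=
  fun j => A.mulVec (psiOf p x) j - y j

def sgrad {m N : ℕ} (A : Matrix (Fin m) (Fin N) ℝ) (y : Fin m → ℝ) (p : ℝ)
    (x : EuclideanSpace ℝ (Fin N ⊕ Fin N)) : Fin N → ℝ :=
  fun i => ∑ j, A j i * resid A y p x j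

def gradVec {m N : ℕ} (A : Matrix (Fin m) (Fin N) ℝ) (y : Fin m → ℝ) (p : ℝ)
    (x : EuclideanSpace ℝ (Fin N ⊕ Fin N)) : EuclideanSpace ℝ (Fin N ⊕ Fin N) :=
  WithLp.toLp 2 (fun k => Sum.elim (fun i => p * x (Sum.inl i) ^ (p-1) * sgrad A y p x i)
    (fun i => -(p * x (Sum.inr i) ^ (p-1) * sgrad A y p x i)) k)

lemma mulVec_apply {m N : ℕ} (A : Matrix (Fin m) (Fin N) ℝ) (v : Fin N → ℝ) (j : Fin m) :
    A.mulVec v j = ∑ i, A j i * v i := rfl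

lemma hasGradient_loss {m N : ℕ} (A : Matrix (Fin m) (Fin N) ℝ) (y : Fin m → ℝ) {p : ℝ} (hp : 1 ≤ p)
    (x : EuclideanSpace ℝ (Fin N ⊕ Fin N)) :
    HasGradientAt (lossFun A y p) (gradVec A y p x) x := by
  classical
  -- component derivative CLMs
  have hpow : ∀ k : Fin N ⊕ Fin N, HasFDerivAt (fun z : EuclideanSpace ℝ (Fin N ⊕ Fin N) => z k ^ p)
      ((p * x k ^ (p-1)) • (EuclideanSpace.proj k : EuclideanSpace ℝ (Fin N ⊕ Fin N) →L[ℝ] ℝ)) x := by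
    intro k
    have h1 : HasFDerivAt (fun z : EuclideanSpace ℝ (Fin N ⊕ Fin N) => z k) (EuclideanSpace.proj k : EuclideanSpace ℝ (Fin N ⊕ Fin N) →L[ℝ] ℝ) x :=
      ContinuousLinearMap.hasFDerivAt (f := (EuclideanSpace.proj k : EuclideanSpace ℝ (Fin N ⊕ Fin N) →L[ℝ] ℝ))
    exact (Real.hasDerivAt_rpow_const (x := x k) (p := p) (Or.inr hp)).comp_hasFDerivAt x h1
  -- derivative of each residual
  set DF : Fin m → (EuclideanSpace ℝ (Fin N ⊕ Fin N) →L[ℝ] ℝ) := fun j => ∑ i : Fin N, A j i •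
      (((p * x (Sum.inl i) ^ (p-1)) • (EuclideanSpace.proj (Sum.inl i) : EuclideanSpace ℝ (Fin N ⊕ Fin N) →L[ℝ] ℝ)) -
       ((p * x (Sum.inr i) ^ (p-1)) • (EuclideanSpace.proj (Sum.inr i) : EuclideanSpace ℝ (Fin N ⊕ Fin N) →L[ℝ] ℝ))) with hDF
  have hF : ∀ j : Fin m, HasFDerivAt (fun z : EuclideanSpace ℝ (Fin N ⊕ Fin N) => A.mulVec (psiOf p z) j - y j) (DF j) x := by
    intro j
    have : (fun z : EuclideanSpace ℝ (Fin N ⊕ Fin N) => A.mulVec (psiOf p z) j - y j)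
        = fun z : EuclideanSpace ℝ (Fin N ⊕ Fin N) => (∑ i, A j i * (z (Sum.inl i) ^ p - z (Sum.inr i) ^ p)) - y j := by
      funext z; rw [mulVec_apply]; rfl
    rw [this, hDF]
    apply HasFDerivAt.sub_const
    apply HasFDerivAt.fun_sum
    intro i _
    exact ((hpow (Sum.inl i)).sub (hpow (Sum.inr i))).const_mul (A j i)
  -- derivative of the loss
  set D : EuclideanSpace ℝ (Fin N ⊕ Fin N) →L[ℝ] ℝ := (1/2 : ℝ) • ∑ j : Fin m,
      ((A.mulVec (psiOf p x) j - y j) • DF j + (A.mulVec (psiOf p x) j - y j) • DF j) with hD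
  have hL : HasFDerivAt (lossFun A y p) D x := by
    have : lossFun A y p = fun z : EuclideanSpace ℝ (Fin N ⊕ Fin N) => (1/2 : ℝ) * ∑ j, ((fun w : EuclideanSpace ℝ (Fin N ⊕ Fin N) => A.mulVec (psiOf p w) j - y j) z * (fun w : EuclideanSpace ℝ (Fin N ⊕ Fin N) => A.mulVec (psiOf p w) j - y j) z) := by
      funext z; rw [lossFun]; congr 1; exact Finset.sum_congr rfl fun j _ => pow_two _
    rw [this, hD]
    exact (HasFDerivAt.fun_sum (fun j _ => (hF j).mul (hF j))).const_mul (1/2 : ℝ)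
  rw [hasGradientAt_iff_hasFDerivAt]
  refine hL.congr_fderiv ?_
  symm
  apply ContinuousLinearMap.ext
  intro v
  rw [InnerProductSpace.toDual_apply_apply]
  simp only [hD, hDF, ContinuousLinearMap.smul_apply, ContinuousLinearMap.sum_apply,
    ContinuousLinearMap.add_apply, ContinuousLinearMap.sub_apply, ContinuousLinearMap.coe_smul',
    Pi.smul_apply, smul_eq_mul]
  rw [PiLp.inner_apply]
  simp only [RCLike.inner_apply, conj_trivial]
  rw [Fintype.sum_sum_type]
  simp only [gradVec, Sum.elim_inl, Sum.elim_inr, sgrad, resid]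
  have hproj : ∀ k : Fin N ⊕ Fin N, (EuclideanSpace.proj k : EuclideanSpace ℝ (Fin N ⊕ Fin N) →L[ℝ] ℝ) v = v k := fun k => rfl
  simp only [hproj]
  trans (∑ i : Fin N, ∑ j : Fin m, (A.mulVec (psiOf p x) j - y j) *
      (A j i * (p * x (Sum.inl i) ^ (p - 1) * v (Sum.inl i) -
        p * x (Sum.inr i) ^ (p - 1) * v (Sum.inr i))))
  · rw [← Finset.sum_add_distrib]
    refine Finset.sum_congr rfl fun i _ => ?_
    have e1 : ∑ j : Fin m, (A.mulVec (psiOf p x) j - y j) *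
        (A j i * (p * x (Sum.inl i) ^ (p - 1) * v (Sum.inl i) -
          p * x (Sum.inr i) ^ (p - 1) * v (Sum.inr i)))
        = (∑ j : Fin m, A j i * (A.mulVec (psiOf p x) j - y j)) *
          (p * x (Sum.inl i) ^ (p - 1) * v (Sum.inl i) -
            p * x (Sum.inr i) ^ (p - 1) * v (Sum.inr i)) := by
      rw [Finset.sum_mul]
      exact Finset.sum_congr rfl fun j _ => by ring
    rw [e1]
    ring
  · rw [Finset.sum_comm, Finset.mul_sum]
    refine Finset.sum_congr rfl fun j _ => ?_
    rw [← Finset.mul_sum]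
    ring


lemma bal_gt {p α a b : ℝ} (hp : 1 ≤ p) (hα : 0 < α) (ha : 0 ≤ a) (hb : 0 ≤ b)
    (hab : α ^ 2 ≤ a * b) :
    2 * α ^ (2 * p - 2) ≤ (a ^ (p - 1)) ^ 2 + (b ^ (p - 1)) ^ 2 := by
  have h1 : 2 * (a ^ (p-1) * b ^ (p-1)) ≤ (a ^ (p-1)) ^ 2 + (b ^ (p-1)) ^ 2 := by
    nlinarith [sq_nonneg (a ^ (p-1) - b ^ (p-1))]
  have h2 : a ^ (p-1) * b ^ (p-1) = (a * b) ^ (p-1) := (Real.mul_rpow ha hb).symm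
  have h3 : (α ^ 2 : ℝ) ^ (p-1) ≤ (a * b) ^ (p-1) :=
    Real.rpow_le_rpow (by positivity) hab (by linarith)
  have h4 : (α ^ 2 : ℝ) ^ (p-1) = α ^ (2 * p - 2) := by
    rw [← Real.rpow_natCast α 2, ← Real.rpow_mul hα.le]
    congr 1
    push_cast
    ring
  rw [← h4]
  calc 2 * (α^2:ℝ) ^ (p-1) ≤ 2 * ((a*b) ^ (p-1)) := by linarith
    _ = 2 * (a ^ (p-1) * b ^ (p-1)) := by rw [h2]
    _ ≤ _ := h1

lemma grad_sq {m N : ℕ} (A : Matrix (Fin m) (Fin N) ℝ) (y : Fin m → ℝ) {p α : ℝ}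
    (hp0 : 0 < p) (hα : 0 < α)
    (hσ : ∀ z : Fin m → ℝ, sigmaMin A * norm2 z ≤ norm2 (A.transpose.mulVec z))
    (hσ0 : 0 < sigmaMin A)
    (x : EuclideanSpace ℝ (Fin N ⊕ Fin N))
    (hbal : ∀ i : Fin N, 2 * α ^ (2*p-2) ≤ (x (Sum.inl i) ^ (p-1))^2 + (x (Sum.inr i) ^ (p-1))^2) :
    2 * (2 * p^2 * sigmaMin A^2 * α^(2*p-2)) * lossFun A y p x
      ≤ ∑ k : Fin N ⊕ Fin N, gradVec A y p x k ^ 2 := by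
  have hsum : ∑ k : Fin N ⊕ Fin N, gradVec A y p x k ^ 2
      = ∑ i : Fin N, (p^2 * sgrad A y p x i ^ 2) *
          ((x (Sum.inl i) ^ (p-1))^2 + (x (Sum.inr i) ^ (p-1))^2) := by
    rw [Fintype.sum_sum_type, ← Finset.sum_add_distrib]
    refine Finset.sum_congr rfl fun i _ => ?_
    simp only [gradVec, PiLp.toLp_apply, Sum.elim_inl, Sum.elim_inr]
    ring
  have hs : sigmaMin A ^ 2 * ∑ j, resid A y p x j ^ 2 ≤ ∑ i, sgrad A y p x i ^ 2 := by
    have h2 := hσ (resid A y p x)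
    have h3 : A.transpose.mulVec (resid A y p x) = sgrad A y p x := by
      funext i; rfl
    have h4 := pow_le_pow_left₀ (mul_nonneg hσ0.le (norm2_nonneg _)) h2 2
    rw [mul_pow, sq_norm2, h3, sq_norm2] at h4
    exact h4
  have hloss : lossFun A y p x = 1/2 * ∑ j, resid A y p x j ^ 2 := rfl
  calc 2 * (2 * p^2 * sigmaMin A^2 * α^(2*p-2)) * lossFun A y p x
      = (2 * p^2 * α^(2*p-2)) * (sigmaMin A^2 * ∑ j, resid A y p x j ^ 2) := by
        rw [hloss]; ring
    _ ≤ (2 * p^2 * α^(2*p-2)) * ∑ i, sgrad A y p x i ^ 2 := by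
        apply mul_le_mul_of_nonneg_left hs (by positivity)
    _ = ∑ i : Fin N, (p^2 * sgrad A y p x i ^ 2) * (2 * α^(2*p-2)) := by
        rw [Finset.mul_sum]
        exact Finset.sum_congr rfl fun i _ => by ring
    _ ≤ ∑ i : Fin N, (p^2 * sgrad A y p x i ^ 2) *
          ((x (Sum.inl i) ^ (p-1))^2 + (x (Sum.inr i) ^ (p-1))^2) :=
        Finset.sum_le_sum fun i _ => mul_le_mul_of_nonneg_left (hbal i) (by positivity)
    _ = _ := hsum.symm

lemma exp_decay (En D : ℝ → ℝ) (c : ℝ) (hc : 0 ≤ c)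
    (hE : ∀ t, 0 ≤ t → HasDerivWithinAt En (D t) (Set.Ici 0) t)
    (hD : ∀ t, 0 ≤ t → D t ≤ -(c * En t)) :
    ∀ t, 0 ≤ t → En t ≤ En 0 * Real.exp (-(c*t)) := by
  have hEc : ContinuousOn En (Set.Ici 0) := fun t ht => (hE t ht).continuousWithinAt
  set F := fun t => En t * Real.exp (c*t) with hF
  have hexp : ∀ t : ℝ, HasDerivAt (fun u => Real.exp (c*u)) (Real.exp (c*t) * c) t := by
    intro t
    simpa using ((hasDerivAt_id t).const_mul c).exp
  have hFder : ∀ t, 0 < t →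
      HasDerivAt F (D t * Real.exp (c*t) + En t * (Real.exp (c*t) * c)) t := by
    intro t ht
    have h1 : HasDerivAt En (D t) t := (hE t ht.le).hasDerivAt (Ici_mem_nhds ht)
    exact h1.mul (hexp t)
  have hanti : AntitoneOn F (Set.Ici 0) := by
    apply antitoneOn_of_deriv_nonpos (convex_Ici 0)
      (hEc.mul (Continuous.continuousOn (by fun_prop)))
    · intro t ht
      rw [interior_Ici] at ht
      exact (hFder t ht).differentiableAt.differentiableWithinAt
    · intro t ht
      rw [interior_Ici] at ht
      change deriv F t ≤ 0
      rw [(hFder t ht).deriv]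
      have h2 := hD t ht.le
      have h3 : D t + c * En t ≤ 0 := by linarith
      have h4 := mul_le_mul_of_nonneg_right h3 (Real.exp_pos (c*t)).le
      nlinarith [h4]
  intro t ht
  have h5 : F t ≤ F 0 := hanti (Set.self_mem_Ici) ht ht
  have h6 : F 0 = En 0 := by simp [hF]
  have h7 : (0:ℝ) < Real.exp (c*t) := Real.exp_pos _
  rw [Real.exp_neg, ← div_eq_mul_inv, le_div_iff₀ h7]
  calc En t * Real.exp (c*t) = F t := rfl
    _ ≤ F 0 := h5
    _ = En 0 := h6

lemma tail {m N : ℕ} (hm : 1 ≤ m) (A : Matrix (Fin m) (Fin N) ℝ) (hA : A.rank = m)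
    (y : Fin m → ℝ) {p : ℝ} (hp : 2 ≤ p) {α : ℝ} (hα : 0 < α)
    (θ : ℝ → EuclideanSpace ℝ (Fin N ⊕ Fin N))
    (hθ0 : ∀ i : Fin N ⊕ Fin N, θ 0 i = α)
    (hflow' : ∀ t, 0 ≤ t → HasDerivWithinAt θ (-(gradVec A y p (θ t))) (Set.Ici 0) t)
    (hbal : ∀ t, 0 ≤ t → ∀ i : Fin N,
      2 * α ^ (2*p-2) ≤ (θ t (Sum.inl i) ^ (p-1))^2 + (θ t (Sum.inr i) ^ (p-1))^2) :
    (∀ t : ℝ, 0 ≤ t →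
      norm2 (fun j => A.mulVec (psiOf p (θ t)) j - y j) ≤
        norm2 y * Real.exp (-(2 * p ^ 2 * sigmaMin A ^ 2 * α ^ (2 * p - 2)) * t)) ∧
    Filter.Tendsto (fun t => A.mulVec (psiOf p (θ t))) Filter.atTop (nhds y) := by
  obtain ⟨hσ0, hσ⟩ := sigma_lemmas hm A hA
  have hp1 : (1:ℝ) ≤ p := by linarith
  have hp0 : (0:ℝ) < p := by linarith
  set C : ℝ := 2 * p ^ 2 * sigmaMin A ^ 2 * α ^ (2 * p - 2) with hC
  have hαe : (0:ℝ) < α ^ (2*p-2) := Real.rpow_pos_of_pos hα _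
  have hCpos : 0 < C :=
    mul_pos (mul_pos (mul_pos two_pos (pow_pos hp0 2)) (pow_pos hσ0 2)) hαe
  set En := fun t => lossFun A y p (θ t) with hEn
  set Df := fun t => -∑ k : Fin N ⊕ Fin N, gradVec A y p (θ t) k ^ 2 with hDf
  have hEd : ∀ t, 0 ≤ t → HasDerivWithinAt En (Df t) (Set.Ici 0) t := by
    intro t ht
    have h1 := (hasGradient_loss A y hp1 (θ t)).hasFDerivAt.comp_hasDerivWithinAt t (hflow' t ht)
    refine h1.congr_deriv ?_
    symm
    rw [InnerProductSpace.toDual_apply_apply, inner_neg_right, PiLp.inner_apply]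
    simp only [RCLike.inner_apply, conj_trivial, hDf]
    congr 1
    exact Finset.sum_congr rfl fun k _ => pow_two _
  have hDle : ∀ t, 0 ≤ t → Df t ≤ -(2 * C * En t) := by
    intro t ht
    have h2 := grad_sq A y hp0 hα hσ hσ0 (θ t) (hbal t ht)
    rw [hDf]
    simp only [hC, hEn] at *
    linarith
  have hdecay := exp_decay En Df (2*C) (by linarith) hEd hDle
  have hψ0 : psiOf p (θ 0) = 0 := by
    funext i
    simp [psiOf, hθ0]
  have hE0 : En 0 = 1/2 * ∑ j, y j ^ 2 := by
    simp only [hEn, lossFun, hψ0, Matrix.mulVec_zero]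
    congr 1
    exact Finset.sum_congr rfl fun j _ => by simp
  have hEsq : ∀ t, (norm2 (fun j => A.mulVec (psiOf p (θ t)) j - y j))^2 = 2 * En t := by
    intro t
    rw [sq_norm2]
    simp only [hEn, lossFun]
    ring
  have hmain : ∀ t, 0 ≤ t →
      norm2 (fun j => A.mulVec (psiOf p (θ t)) j - y j) ≤ norm2 y * Real.exp (-C * t) := by
    intro t ht
    have h1 := hdecay t ht
    have h2 : (norm2 (fun j => A.mulVec (psiOf p (θ t)) j - y j))^2
        ≤ (norm2 y * Real.exp (-C * t))^2 := by
      rw [hEsq t]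
      have h3 : (norm2 y * Real.exp (-C*t))^2 = (norm2 y)^2 * Real.exp (-(2*C*t)) := by
        rw [mul_pow, pow_two (Real.exp (-C*t)), ← Real.exp_add]
        congr 2
        ring
      rw [h3, sq_norm2]
      have h4 : 2 * En 0 = ∑ j, y j ^ 2 := by rw [hE0]; ring
      rw [← h4]
      linarith [h1]
    have h6 : 0 ≤ norm2 y * Real.exp (-C*t) := by
      have := norm2_nonneg y
      positivity
    calc norm2 (fun j => A.mulVec (psiOf p (θ t)) j - y j)
        = Real.sqrt ((norm2 (fun j => A.mulVec (psiOf p (θ t)) j - y j))^2) :=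
          (Real.sqrt_sq (norm2_nonneg _)).symm
      _ ≤ Real.sqrt ((norm2 y * Real.exp (-C * t))^2) := Real.sqrt_le_sqrt h2
      _ = norm2 y * Real.exp (-C * t) := Real.sqrt_sq h6
  constructor
  · intro t ht
    exact hmain t ht
  · rw [tendsto_pi_nhds]
    intro j
    have hbound : ∀ t, 0 ≤ t → ‖A.mulVec (psiOf p (θ t)) j - y j‖ ≤ norm2 y * Real.exp (-C*t) := by
      intro t ht
      have h1 : |A.mulVec (psiOf p (θ t)) j - y j| ≤
          norm2 (fun j' => A.mulVec (psiOf p (θ t)) j' - y j') := by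
        rw [← Real.sqrt_sq_eq_abs]
        unfold norm2
        apply Real.sqrt_le_sqrt
        exact Finset.single_le_sum (f := fun j' => (A.mulVec (psiOf p (θ t)) j' - y j')^2)
          (fun j' _ => sq_nonneg _) (Finset.mem_univ j)
      rw [Real.norm_eq_abs]
      exact le_trans h1 (hmain t ht)
    have hto : Filter.Tendsto (fun t => norm2 y * Real.exp (-C*t)) Filter.atTop (nhds 0) := by
      rw [show (0:ℝ) = norm2 y * 0 by ring]
      apply Filter.Tendsto.const_mul
      have h1 : Filter.Tendsto (fun t : ℝ => -C*t) Filter.atTop Filter.atBot := by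
        have h2 : Filter.Tendsto (fun t : ℝ => C*t) Filter.atTop Filter.atTop :=
          Filter.Tendsto.const_mul_atTop hCpos Filter.tendsto_id
        have h3 : Filter.Tendsto (fun t : ℝ => -(C*t)) Filter.atTop Filter.atBot :=
          Filter.tendsto_neg_atTop_atBot.comp h2
        simpa [neg_mul] using h3
      exact Real.tendsto_exp_atBot.comp h1
    have h0 : Filter.Tendsto (fun t => A.mulVec (psiOf p (θ t)) j - y j) Filter.atTop (nhds 0) := by
      apply squeeze_zero_norm' (Filter.eventually_atTop.2 ⟨0, fun t ht => hbound t ht⟩) hto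
    have := h0.add_const (y j)
    simpa using this

end StmtSix

end StmtSix

/-- Proposition `Apsi_to_y`: ‖Aψ_α(t) − y‖₂ ≤ ‖y‖₂ e^{−Ct} with
C = 2p²σ_min(A)²α^{2p−2}; in particular Aψ_α(t) → y as t → ∞. -/
theorem stmt6 (m N : ℕ) (hm : 1 ≤ m) (hmN : m < N)
    (A : Matrix (Fin m) (Fin N) ℝ) (hA : A.rank = m)
    (y : Fin m → ℝ) (p : ℝ) (hp : 2 ≤ p) (α : ℝ) (hα : 0 < α)
    (θ : ℝ → EuclideanSpace ℝ (Fin N ⊕ Fin N))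
    (hθ0 : ∀ i : Fin N ⊕ Fin N, θ 0 i = α)
    (hflow : ∀ t : ℝ, 0 ≤ t →
      HasDerivWithinAt θ (-gradient (lossFun A y p) (θ t)) (Set.Ici 0) t) :
    (∀ t : ℝ, 0 ≤ t →
      norm2 (fun j => A.mulVec (psiOf p (θ t)) j - y j) ≤
        norm2 y * Real.exp (-(2 * p ^ 2 * sigmaMin A ^ 2 * α ^ (2 * p - 2)) * t)) ∧
    Filter.Tendsto (fun t => A.mulVec (psiOf p (θ t))) Filter.atTop (nhds y) := by
  classical
  have hp1 : (1:ℝ) ≤ p := by linarith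
  have hgrad : ∀ t : ℝ, gradient (lossFun A y p) (θ t) = StmtSix.gradVec A y p (θ t) :=
    fun t => (StmtSix.hasGradient_loss A y hp1 (θ t)).gradient
  have hflow' : ∀ t, 0 ≤ t →
      HasDerivWithinAt θ (-(StmtSix.gradVec A y p (θ t))) (Set.Ici 0) t := by
    intro t ht
    have h := hflow t ht
    rwa [hgrad t] at h
  have hcomp : ∀ t, 0 ≤ t → ∀ k, HasDerivWithinAt (fun s => θ s k)
      (-(StmtSix.gradVec A y p (θ t) k)) (Set.Ici 0) t := by
    intro t ht k
    exact (ContinuousLinearMap.hasFDerivAt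
      (f := (EuclideanSpace.proj k : EuclideanSpace ℝ (Fin N ⊕ Fin N) →L[ℝ] ℝ))).comp_hasDerivWithinAt
      t (hflow' t ht)
  rcases eq_or_lt_of_le hp with hp2 | hp2
  · -- case p = 2
    subst hp2
    apply StmtSix.tail hm A hA y le_rfl hα θ hθ0 hflow'
    intro t ht i
    have hinv : θ t (Sum.inl i) * θ t (Sum.inr i) = α * α := by
      set f : ℝ → ℝ := fun s => θ s (Sum.inl i) * θ s (Sum.inr i) with hf
      have hcont : ContinuousOn f (Set.Icc 0 t) := by
        apply ContinuousOn.mul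
        · exact fun s hs => ((hcomp s hs.1 (Sum.inl i)).continuousWithinAt).mono (fun v hv => hv.1)
        · exact fun s hs => ((hcomp s hs.1 (Sum.inr i)).continuousWithinAt).mono (fun v hv => hv.1)
      have hder : ∀ x ∈ Set.Ico 0 t, HasDerivWithinAt f 0 (Set.Ici x) x := by
        intro x hx
        have h1 := (hcomp x hx.1 (Sum.inl i)).mono (Set.Ici_subset_Ici.2 hx.1)
        have h2 := (hcomp x hx.1 (Sum.inr i)).mono (Set.Ici_subset_Ici.2 hx.1)
        have h3 := h1.mul h2
        refine h3.congr_deriv ?_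
        symm
        show (0:ℝ) = -(2 * θ x (Sum.inl i) ^ ((2:ℝ)-1) * StmtSix.sgrad A y 2 (θ x) i) *
            θ x (Sum.inr i) + θ x (Sum.inl i) *
            -(-(2 * θ x (Sum.inr i) ^ ((2:ℝ)-1) * StmtSix.sgrad A y 2 (θ x) i))
        rw [show (2:ℝ) - 1 = 1 by norm_num, Real.rpow_one, Real.rpow_one]
        ring
      have hconst := constant_of_has_deriv_right_zero hcont hder t (Set.right_mem_Icc.2 ht)
      have hf0 : f 0 = α * α := by simp only [hf, hθ0]
      exact hconst.trans hf0
    rw [show (2:ℝ) - 1 = 1 by norm_num, Real.rpow_one, Real.rpow_one,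
      show (2:ℝ)*2-2 = ((2:ℕ):ℝ) by norm_num, Real.rpow_natCast]
    nlinarith [sq_nonneg (θ t (Sum.inl i) - θ t (Sum.inr i)), hinv]
  · -- case 2 < p
    have hppos : (0:ℝ) < p - 2 := by linarith
    have hq : 2 - p < 0 := by linarith
    have hInvOn : ∀ T, 0 ≤ T → (∀ s ∈ Set.Icc 0 T, ∀ k, 0 < θ s k) →
        ∀ s ∈ Set.Icc 0 T, ∀ i : Fin N,
          θ s (Sum.inl i) ^ (2-p) + θ s (Sum.inr i) ^ (2-p) = 2 * α ^ (2-p) := by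
      intro T hT hpos s hs i
      set f : ℝ → ℝ := fun u => θ u (Sum.inl i) ^ (2-p) + θ u (Sum.inr i) ^ (2-p) with hf
      have hcont : ContinuousOn f (Set.Icc 0 T) := by
        apply ContinuousOn.add
        · apply ContinuousOn.rpow_const
          · exact fun u hu => ((hcomp u hu.1 (Sum.inl i)).continuousWithinAt).mono (fun v hv => hv.1)
          · exact fun u hu => Or.inl (hpos u hu (Sum.inl i)).ne'
        · apply ContinuousOn.rpow_const
          · exact fun u hu => ((hcomp u hu.1 (Sum.inr i)).continuousWithinAt).mono (fun v hv => hv.1)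
          · exact fun u hu => Or.inl (hpos u hu (Sum.inr i)).ne'
      have hder : ∀ x ∈ Set.Ico 0 T, HasDerivWithinAt f 0 (Set.Ici x) x := by
        intro x hx
        have hx0 : 0 ≤ x := hx.1
        have hposx := hpos x ⟨hx.1, hx.2.le⟩
        have h1 := (Real.hasDerivAt_rpow_const (x := θ x (Sum.inl i)) (p := 2-p)
          (Or.inl (hposx (Sum.inl i)).ne')).comp_hasDerivWithinAt x
          ((hcomp x hx0 (Sum.inl i)).mono (Set.Ici_subset_Ici.2 hx0))
        have h2 := (Real.hasDerivAt_rpow_const (x := θ x (Sum.inr i)) (p := 2-p)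
          (Or.inl (hposx (Sum.inr i)).ne')).comp_hasDerivWithinAt x
          ((hcomp x hx0 (Sum.inr i)).mono (Set.Ici_subset_Ici.2 hx0))
        have h3 := h1.add h2
        refine h3.congr_deriv ?_
        symm
        show (0:ℝ) = (2-p) * θ x (Sum.inl i) ^ (2-p-1) *
            -(p * θ x (Sum.inl i) ^ (p-1) * StmtSix.sgrad A y p (θ x) i) +
            (2-p) * θ x (Sum.inr i) ^ (2-p-1) *
            -(-(p * θ x (Sum.inr i) ^ (p-1) * StmtSix.sgrad A y p (θ x) i))
        have k1 : θ x (Sum.inl i) ^ (2-p-1) * θ x (Sum.inl i) ^ (p-1) = 1 := by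
          rw [← Real.rpow_add (hposx (Sum.inl i)), show 2-p-1+(p-1) = (0:ℝ) by ring,
            Real.rpow_zero]
        have k2 : θ x (Sum.inr i) ^ (2-p-1) * θ x (Sum.inr i) ^ (p-1) = 1 := by
          rw [← Real.rpow_add (hposx (Sum.inr i)), show 2-p-1+(p-1) = (0:ℝ) by ring,
            Real.rpow_zero]
        linear_combination ((2-p) * p * StmtSix.sgrad A y p (θ x) i) * k1 -
          ((2-p) * p * StmtSix.sgrad A y p (θ x) i) * k2
      have hconst := constant_of_has_deriv_right_zero hcont hder s hs
      have hf0 : f 0 = 2 * α ^ (2-p) := by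
        simp only [hf, hθ0]
        ring
      exact hconst.trans hf0
    set β : ℝ := 2 ^ (-(p-2)⁻¹) * α with hβdef
    have hβ : 0 < β := by positivity
    have hβα : β < α := by
      have h1 : (2:ℝ) ^ (-(p-2)⁻¹) < 1 :=
        Real.rpow_lt_one_of_one_lt_of_neg one_lt_two (neg_lt_zero.mpr (inv_pos.mpr hppos))
      have h2 : (0:ℝ) < (2:ℝ) ^ (-(p-2)⁻¹) := by positivity
      nlinarith
    have hβrpow : β ^ (2-p) = 2 * α ^ (2-p) := by
      rw [hβdef, Real.mul_rpow (by positivity) hα.le,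
        ← Real.rpow_mul (by norm_num : (0:ℝ) ≤ 2)]
      congr 1
      have hne : p - 2 ≠ 0 := ne_of_gt hppos
      rw [show -(p-2)⁻¹ * (2-p) = 1 by field_simp; ring]
      exact Real.rpow_one 2
    have hposIcc : ∀ b, 0 ≤ b → ∀ s ∈ Set.Icc 0 b, ∀ k, β ≤ θ s k := by
      intro b hb
      set S := {t : ℝ | t ∈ Set.Icc 0 b ∧ ∀ s ∈ Set.Icc 0 t, ∀ k, β ≤ θ s k} with hSdef
      have h0S : 0 ∈ S := by
        constructor
        · exact ⟨le_refl 0, hb⟩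
        · intro s hs k
          have hs0 : s = 0 := le_antisymm hs.2 hs.1
          rw [hs0, hθ0]
          exact hβα.le
      have hbdd : BddAbove S := ⟨b, fun t ht => ht.1.2⟩
      have hT0 : 0 ≤ sSup S := le_csSup hbdd h0S
      have hTb : sSup S ≤ b := csSup_le ⟨0, h0S⟩ fun t ht => ht.1.2
      set T := sSup S with hTdef
      have hlt : ∀ s, 0 ≤ s → s < T → ∀ k, β ≤ θ s k := by
        intro s hs hsT k
        obtain ⟨t, htS, hst⟩ := exists_lt_of_lt_csSup ⟨0, h0S⟩ hsT
        exact htS.2 s ⟨hs, hst.le⟩ k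
      have hTk : ∀ k, β ≤ θ T k := by
        intro k
        rcases eq_or_lt_of_le hT0 with h | h
        · rw [← h, hθ0]; exact hβα.le
        · have hclos : T ∈ closure (Set.Ico 0 T) := by
            rw [closure_Ico h.ne]
            exact ⟨hT0, le_refl T⟩
          have hnb : (nhdsWithin T (Set.Ico 0 T)).NeBot :=
            mem_closure_iff_nhdsWithin_neBot.1 hclos
          have hcw : Filter.Tendsto (fun s => θ s k) (nhdsWithin T (Set.Ico 0 T)) (nhds (θ T k)) :=
            ((hcomp T hT0 k).continuousWithinAt).mono (fun v hv => hv.1)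
          apply ge_of_tendsto hcw
          filter_upwards [self_mem_nhdsWithin] with s hs
          exact hlt s hs.1 hs.2 k
      have hTS : T ∈ S := by
        refine ⟨⟨hT0, hTb⟩, ?_⟩
        intro s hs k
        rcases lt_or_eq_of_le hs.2 with h | h
        · exact hlt s hs.1 h k
        · rw [h]; exact hTk k
      rcases eq_or_lt_of_le hTb with hTeq | hTlt
      · intro s hs k
        exact hTS.2 s (hTeq ▸ hs) k
      · exfalso
        have hposT : ∀ s ∈ Set.Icc 0 T, ∀ k, 0 < θ s k :=
          fun s hs k => lt_of_lt_of_le hβ (hTS.2 s hs k)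
        have hinvT := hInvOn T hT0 hposT
        have hTmem : T ∈ Set.Icc (0:ℝ) T := ⟨hT0, le_refl T⟩
        have hposTT := hposT T hTmem
        have hstrict : ∀ k, β < θ T k := by
          intro k
          cases k with
          | inl i =>
            have hi := hinvT T hTmem i
            have hpos2 : 0 < θ T (Sum.inr i) ^ (2-p) :=
              Real.rpow_pos_of_pos (hposTT (Sum.inr i)) _
            have hlt2 : θ T (Sum.inl i) ^ (2-p) < β ^ (2-p) := by
              rw [hβrpow]; linarith
            exact (Real.rpow_lt_rpow_iff_of_neg (hposTT (Sum.inl i)) hβ hq).1 hlt2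
          | inr i =>
            have hi := hinvT T hTmem i
            have hpos2 : 0 < θ T (Sum.inl i) ^ (2-p) :=
              Real.rpow_pos_of_pos (hposTT (Sum.inl i)) _
            have hlt2 : θ T (Sum.inr i) ^ (2-p) < β ^ (2-p) := by
              rw [hβrpow]; linarith
            exact (Real.rpow_lt_rpow_iff_of_neg (hposTT (Sum.inr i)) hβ hq).1 hlt2
        have hev : ∀ᶠ s in nhdsWithin T (Set.Ici 0), ∀ k, β < θ s k := by
          rw [Filter.eventually_all]
          intro k
          have hcw : Filter.Tendsto (fun s => θ s k) (nhdsWithin T (Set.Ici 0)) (nhds (θ T k)) :=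
            (hcomp T hT0 k).continuousWithinAt
          exact hcw.eventually (eventually_gt_nhds (hstrict k))
        obtain ⟨ε, hε0, hball⟩ := Metric.mem_nhdsWithin_iff.1 hev
        have hTt' : T < min b (T + ε/2) := lt_min hTlt (by linarith)
        have ht'S : min b (T + ε/2) ∈ S := by
          refine ⟨⟨le_trans hT0 hTt'.le, min_le_left _ _⟩, ?_⟩
          intro s hs k
          rcases le_or_gt s T with h | h
          · exact hTS.2 s ⟨hs.1, h⟩ k
          · have hsball : s ∈ Metric.ball T ε ∩ Set.Ici 0 := by
              constructor
              · rw [Metric.mem_ball, Real.dist_eq, abs_of_pos (by linarith : (0:ℝ) < s - T)]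
                have h2 : s ≤ T + ε/2 := le_trans hs.2 (min_le_right _ _)
                linarith
              · exact hs.1
            exact (hball hsball k).le
        have hcon : min b (T + ε/2) ≤ T := le_csSup hbdd ht'S
        linarith
    have hposall : ∀ t, 0 ≤ t → ∀ k, 0 < θ t k :=
      fun t ht k => lt_of_lt_of_le hβ (hposIcc t ht t ⟨ht, le_refl t⟩ k)
    have hinv : ∀ t, 0 ≤ t → ∀ i : Fin N,
        θ t (Sum.inl i) ^ (2-p) + θ t (Sum.inr i) ^ (2-p) = 2 * α ^ (2-p) :=
      fun t ht i => hInvOn t ht (fun s hs k => lt_of_lt_of_le hβ (hposIcc t ht s hs k))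
        t ⟨ht, le_refl t⟩ i
    apply StmtSix.tail hm A hA y hp hα θ hθ0 hflow'
    intro t ht i
    have hpa : 0 < θ t (Sum.inl i) := hposall t ht _
    have hpb : 0 < θ t (Sum.inr i) := hposall t ht _
    have hprod : α^2 ≤ θ t (Sum.inl i) * θ t (Sum.inr i) := by
      have h1 := hinv t ht i
      have h2 : θ t (Sum.inl i) ^ (2-p) * θ t (Sum.inr i) ^ (2-p) ≤ (α ^ (2-p))^2 := by
        have h1' : (θ t (Sum.inl i) ^ (2-p) + θ t (Sum.inr i) ^ (2-p))^2
            = (2 * α ^ (2-p))^2 := by rw [h1]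
        nlinarith [sq_nonneg (θ t (Sum.inl i) ^ (2-p) - θ t (Sum.inr i) ^ (2-p)), h1']
      have e1 : ((α^2:ℝ)) ^ (2-p) = (α ^ (2-p))^2 := by
        rw [← Real.rpow_natCast (α ^ (2-p)) 2, ← Real.rpow_mul hα.le,
          ← Real.rpow_natCast α 2, ← Real.rpow_mul hα.le]
        congr 1
        push_cast
        ring
      have h3 : (θ t (Sum.inl i) * θ t (Sum.inr i)) ^ (2-p) ≤ (α^2 : ℝ) ^ (2-p) := by
        rw [Real.mul_rpow hpa.le hpb.le, e1]
        exact h2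
      exact (Real.rpow_le_rpow_iff_of_neg (mul_pos hpa hpb) (by positivity) hq).1 h3
    exact StmtSix.bal_gt hp1 hα hpa.le hpb.le hprod
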